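/- If u* : [0, t_f] → [0,1]^N is continuous on each interval [(k−1)Δt, kΔt] (uniformly continuous overall), then ‖∫_0^t (u^d(τ) − u*(τ)) dτ‖_∞ ≤ ω(Δt)·Δt for all t ∈ [0, t_f], where ω is a modulus of continuity of u*; in particular the cumulative difference is o(Δt)·Δt as Δt → 0. -/

import Mathlib

open MeasureTheory intervalIntegral

/-- If `u*` is (uniformly) continuous with modulus of continuity `ω`, then the
cumulative difference with its piecewise interval-average `u^d` is bounded by
`ω(Δt)·Δt`, i.e. `o(Δt)·Δt` as `Δt → 0`. -/
theorem piecewise_average_cumulative_diff_le_modulus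
    (N T : ℕ) (hT : 0 < T) (tf : ℝ) (htf : 0 < tf)
    (Δt : ℝ) (hΔt : Δt = tf / T)
    (ustar ud : ℝ → Fin N → ℝ)
    (hbound : ∀ t ∈ Set.Icc (0 : ℝ) tf, ∀ j, ustar t j ∈ Set.Icc (0 : ℝ) 1)
    (hcont : ∀ j, ContinuousOn (fun τ => ustar τ j) (Set.Icc (0 : ℝ) tf))
    (ω : ℝ → ℝ)
    (hmod : ∀ δ : ℝ, 0 ≤ δ → ∀ s ∈ Set.Icc (0 : ℝ) tf, ∀ t ∈ Set.Icc (0 : ℝ) tf,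
      |t - s| ≤ δ → ∀ j, |ustar t j - ustar s j| ≤ ω δ)
    (hud : ∀ k : ℕ, k < T →
      ∀ t ∈ Set.Ico ((k : ℝ) * Δt) (((k : ℝ) + 1) * Δt), ∀ j,
        ud t j = (1 / Δt) * ∫ τ in ((k : ℝ) * Δt)..(((k : ℝ) + 1) * Δt), ustar τ j) :
    ∀ t ∈ Set.Icc (0 : ℝ) tf, ∀ j,
      |∫ τ in (0 : ℝ)..t, (ud τ j - ustar τ j)| ≤ ω Δt * Δt := by
  intro t ht j
  have hT0 : (0:ℝ) < T := by exact_mod_cast hT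
  have hΔt0 : 0 < Δt := by rw [hΔt]; positivity
  have htfT : (T:ℝ) * Δt = tf := by rw [hΔt]; field_simp
  set c : ℕ → ℝ := fun k => (1/Δt) * ∫ τ in ((k:ℝ)*Δt)..(((k:ℝ)+1)*Δt), ustar τ j with hc
  -- subintervals lie in [0, tf]
  have hsub : ∀ k : ℕ, k < T → ∀ τ : ℝ, (k:ℝ)*Δt ≤ τ → τ ≤ ((k:ℝ)+1)*Δt →
      τ ∈ Set.Icc (0:ℝ) tf := by
    intro k hk τ h1 h2
    have hknn : (0:ℝ) ≤ (k:ℝ) := Nat.cast_nonneg k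
    have hk1 : ((k:ℝ)+1) ≤ (T:ℝ) := by exact_mod_cast hk
    constructor
    · nlinarith
    · nlinarith
  have hωnn : 0 ≤ ω Δt := by
    have h0 : (0:ℝ) ∈ Set.Icc (0:ℝ) tf := ⟨le_rfl, htf.le⟩
    have := hmod Δt hΔt0.le 0 h0 0 h0 (by simp [hΔt0.le]) j
    simpa using this
  -- ustar is interval integrable on subintervals of [0,tf]
  have hustarInt : ∀ a b : ℝ, a ∈ Set.Icc (0:ℝ) tf → b ∈ Set.Icc (0:ℝ) tf →
      IntervalIntegrable (fun τ => ustar τ j) volume a b := by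
    intro a b ha hb
    apply ContinuousOn.intervalIntegrable
    apply (hcont j).mono
    intro τ hτ
    rcases Set.mem_uIcc.1 hτ with h | h
    · exact ⟨le_trans ha.1 h.1, le_trans h.2 hb.2⟩
    · exact ⟨le_trans hb.1 h.1, le_trans h.2 ha.2⟩
  -- ud equals the constant c k a.e. on subintervals of piece k
  have hae : ∀ k:ℕ, k < T → ∀ a b : ℝ, (k:ℝ)*Δt ≤ a → b ≤ ((k:ℝ)+1)*Δt → a ≤ b →
      (fun τ => ud τ j) =ᵐ[volume.restrict (Set.Ioc a b)] (fun _ => c k) := by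
    intro k hk a b ha hb hab
    have hne : ∀ᵐ τ : ℝ ∂volume, τ ≠ ((k:ℝ)+1)*Δt := by
      have : {τ : ℝ | ¬ τ ≠ ((k:ℝ)+1)*Δt} = {((k:ℝ)+1)*Δt} := by ext x; simp
      rw [Filter.Eventually, mem_ae_iff]
      simp only [Set.compl_setOf, not_not]
      have : {x : ℝ | x = ((k:ℝ)+1)*Δt} = {((k:ℝ)+1)*Δt} := by ext x; simp
      rw [this]; exact Real.volume_singleton
    filter_upwards [ae_restrict_of_ae hne, ae_restrict_mem measurableSet_Ioc]
      with τ h1 h2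
    have hmem : τ ∈ Set.Ico ((k:ℝ)*Δt) (((k:ℝ)+1)*Δt) :=
      ⟨le_trans ha h2.1.le, lt_of_le_of_ne (le_trans h2.2 hb) h1⟩
    exact hud k hk τ hmem j
  -- ud is interval integrable on subintervals of piece k, with value (b-a) * c k
  have hudInt : ∀ k:ℕ, k < T → ∀ a b : ℝ, (k:ℝ)*Δt ≤ a → b ≤ ((k:ℝ)+1)*Δt → a ≤ b →
      IntervalIntegrable (fun τ => ud τ j) volume a b := by
    intro k hk a b ha hb hab
    rw [intervalIntegrable_iff, Set.uIoc_of_le hab]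
    have hconst : IntegrableOn (fun _ : ℝ => c k) (Set.Ioc a b) volume := by
      exact integrableOn_const (by rw [Real.volume_Ioc]; exact ENNReal.ofReal_ne_top) enorm_ne_top
    exact hconst.congr ((hae k hk a b ha hb hab).symm)
  have hudVal : ∀ k:ℕ, k < T → ∀ a b : ℝ, (k:ℝ)*Δt ≤ a → b ≤ ((k:ℝ)+1)*Δt → a ≤ b →
      (∫ τ in a..b, ud τ j) = (b - a) * c k := by
    intro k hk a b ha hb hab
    have h1 : (∫ τ in a..b, ud τ j) = ∫ _ in a..b, c k := by
      apply intervalIntegral.integral_congr_ae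
      rw [Set.uIoc_of_le hab]
      exact (ae_restrict_iff' measurableSet_Ioc).1 (hae k hk a b ha hb hab)
    rw [h1, intervalIntegral.integral_const, smul_eq_mul]
  -- pointwise bound: the piece average is within ω Δt of ustar on the piece
  have hpt : ∀ k:ℕ, k < T → ∀ x : ℝ, (k:ℝ)*Δt ≤ x → x ≤ ((k:ℝ)+1)*Δt →
      |c k - ustar x j| ≤ ω Δt := by
    intro k hk x hx1 hx2
    have hxmem := hsub k hk x hx1 hx2
    have hle : (k:ℝ)*Δt ≤ ((k:ℝ)+1)*Δt := by nlinarith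
    have hIc : IntervalIntegrable (fun τ => ustar τ j) volume ((k:ℝ)*Δt) (((k:ℝ)+1)*Δt) :=
      hustarInt _ _ (hsub k hk _ le_rfl hle) (hsub k hk _ hle le_rfl)
    have key : c k - ustar x j
        = (1/Δt) * ∫ s in ((k:ℝ)*Δt)..(((k:ℝ)+1)*Δt), (ustar s j - ustar x j) := by
      rw [intervalIntegral.integral_sub hIc intervalIntegrable_const,
        intervalIntegral.integral_const, smul_eq_mul, hc]
      have : ((k:ℝ)+1)*Δt - (k:ℝ)*Δt = Δt := by ring
      rw [this]
      field_simp
    have hbnd : ∀ s ∈ Set.uIoc ((k:ℝ)*Δt) (((k:ℝ)+1)*Δt),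
        ‖ustar s j - ustar x j‖ ≤ ω Δt := by
      intro s hs
      rw [Set.uIoc_of_le hle] at hs
      have hsm := hsub k hk s hs.1.le hs.2
      apply hmod Δt hΔt0.le x hxmem s hsm _ j
      rw [abs_le]
      constructor <;> [linarith [hs.1.le, hx2]; linarith [hs.2, hx1]]
    have hnorm := intervalIntegral.norm_integral_le_of_norm_le_const (C := ω Δt)
      (f := fun s => ustar s j - ustar x j) hbnd
    have habs : |(((k:ℝ)+1)*Δt - (k:ℝ)*Δt)| = Δt := by
      rw [show ((k:ℝ)+1)*Δt - (k:ℝ)*Δt = Δt by ring, abs_of_pos hΔt0]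
    rw [key, abs_mul, abs_of_pos (by positivity : (0:ℝ) < 1/Δt)]
    rw [Real.norm_eq_abs, habs] at hnorm
    calc (1/Δt) * |∫ s in ((k:ℝ)*Δt)..(((k:ℝ)+1)*Δt), (ustar s j - ustar x j)|
        ≤ (1/Δt) * (ω Δt * Δt) := by
          apply mul_le_mul_of_nonneg_left hnorm (by positivity)
      _ = ω Δt := by field_simp
  -- choose the piece containing t
  set k : ℕ := min (⌊t/Δt⌋₊) (T-1) with hkdef
  have hkT : k < T := lt_of_le_of_lt (min_le_right _ _) (Nat.sub_lt hT one_pos)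
  have hk1 : (k:ℝ)*Δt ≤ t := by
    have h1 : (k:ℝ) ≤ (⌊t/Δt⌋₊ : ℝ) := by exact_mod_cast min_le_left _ _
    have h2 : (⌊t/Δt⌋₊ : ℝ) ≤ t/Δt := Nat.floor_le (div_nonneg ht.1 hΔt0.le)
    have := mul_le_mul_of_nonneg_right (le_trans h1 h2) hΔt0.le
    rwa [div_mul_cancel₀ _ hΔt0.ne'] at this
  have hk2 : t ≤ ((k:ℝ)+1)*Δt := by
    by_cases hfl : ⌊t/Δt⌋₊ ≤ T-1
    · have hkeq : k = ⌊t/Δt⌋₊ := min_eq_left hfl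
      have h2 : t/Δt < (⌊t/Δt⌋₊ : ℝ) + 1 := Nat.lt_floor_add_one _
      have := mul_lt_mul_of_pos_right h2 hΔt0
      rw [div_mul_cancel₀ _ hΔt0.ne'] at this
      rw [hkeq]
      exact this.le
    · push_neg at hfl
      have hTfl : T ≤ ⌊t/Δt⌋₊ := by omega
      have hkeq : k = T - 1 := min_eq_right (by omega)
      have : ((k:ℝ)+1) = (T:ℝ) := by
        rw [hkeq]
        have : (T - 1 : ℕ) + 1 = T := Nat.sub_add_cancel hT
        exact_mod_cast congrArg (Nat.cast (R := ℝ)) this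
      rw [this, htfT]
      exact ht.2
  -- integrability on [0, kΔt] and [kΔt, t]
  have hIudpieces : ∀ i, i < k →
      IntervalIntegrable (fun τ => ud τ j) volume ((i:ℝ)*Δt) (((i:ℝ)+1)*Δt) := by
    intro i hi
    exact hudInt i (lt_trans hi hkT) _ _ le_rfl le_rfl (by nlinarith [Nat.cast_nonneg (α := ℝ) i])
  have hIudpieces' : ∀ i, i < k →
      IntervalIntegrable (fun τ => ud τ j) volume ((fun n : ℕ => (n:ℝ)*Δt) i)
        ((fun n : ℕ => (n:ℝ)*Δt) (i+1)) := by
    intro i hi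
    have := hIudpieces i hi
    simpa [Nat.cast_add, Nat.cast_one] using this
  have hIud0 : IntervalIntegrable (fun τ => ud τ j) volume 0 ((k:ℝ)*Δt) := by
    have := IntervalIntegrable.trans_iterate (a := fun n : ℕ => (n:ℝ)*Δt) (n := k)
      (μ := volume) (f := fun τ => ud τ j) hIudpieces'
    simpa using this
  have h0mem : (0:ℝ) ∈ Set.Icc (0:ℝ) tf := ⟨le_rfl, htf.le⟩
  have hkmem : ((k:ℝ)*Δt) ∈ Set.Icc (0:ℝ) tf := hsub k hkT _ le_rfl (by nlinarith)
  have hIus0 : IntervalIntegrable (fun τ => ustar τ j) volume 0 ((k:ℝ)*Δt) :=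
    hustarInt _ _ h0mem hkmem
  have hIud2 : IntervalIntegrable (fun τ => ud τ j) volume ((k:ℝ)*Δt) t :=
    hudInt k hkT _ _ le_rfl hk2 hk1
  have hIus2 : IntervalIntegrable (fun τ => ustar τ j) volume ((k:ℝ)*Δt) t :=
    hustarInt _ _ hkmem ht
  -- the integral over [0, kΔt] vanishes
  have hzero : (∫ τ in (0:ℝ)..((k:ℝ)*Δt), (ud τ j - ustar τ j)) = 0 := by
    rw [intervalIntegral.integral_sub hIud0 hIus0]
    have hsumud := intervalIntegral.sum_integral_adjacent_intervals
      (a := fun n : ℕ => (n:ℝ)*Δt) (μ := volume) (f := fun τ => ud τ j) hIudpieces'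
    have hIuspieces' : ∀ i, i < k →
        IntervalIntegrable (fun τ => ustar τ j) volume ((fun n : ℕ => (n:ℝ)*Δt) i)
          ((fun n : ℕ => (n:ℝ)*Δt) (i+1)) := by
      intro i hi
      have hiT : i < T := lt_trans hi hkT
      have h1 := hsub i hiT _ le_rfl (by nlinarith [Nat.cast_nonneg (α := ℝ) i])
      have h2 := hsub i hiT _ (by nlinarith [Nat.cast_nonneg (α := ℝ) i]) le_rfl
      have := hustarInt _ _ h1 h2
      simpa [Nat.cast_add, Nat.cast_one] using this
    have hsumus := intervalIntegral.sum_integral_adjacent_intervals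
      (a := fun n : ℕ => (n:ℝ)*Δt) (μ := volume) (f := fun τ => ustar τ j) hIuspieces'
    simp only [Nat.cast_zero, zero_mul] at hsumud hsumus
    rw [← hsumud, ← hsumus]
    apply sub_eq_zero_of_eq
    apply Finset.sum_congr rfl
    intro i hi
    have hiT : i < T := lt_trans (Finset.mem_range.1 hi) hkT
    have hcast : ((i+1 : ℕ) : ℝ) = (i:ℝ) + 1 := by push_cast; ring
    rw [hcast]
    rw [hudVal i hiT _ _ le_rfl le_rfl (by nlinarith [Nat.cast_nonneg (α := ℝ) i])]
    rw [hc]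
    have : ((i:ℝ)+1)*Δt - (i:ℝ)*Δt = Δt := by ring
    rw [this]
    field_simp
  -- split and bound
  have hsplit := intervalIntegral.integral_add_adjacent_intervals
    (a := (0:ℝ)) (b := (k:ℝ)*Δt) (c := t) (μ := volume)
    (f := fun τ => ud τ j - ustar τ j) (hIud0.sub hIus0) (hIud2.sub hIus2)
  rw [← hsplit, hzero, zero_add]
  -- the last piece equals the integral of (c k - ustar)
  have heq : (∫ τ in ((k:ℝ)*Δt)..t, (ud τ j - ustar τ j))
      = ∫ τ in ((k:ℝ)*Δt)..t, (c k - ustar τ j) := by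
    rw [intervalIntegral.integral_sub hIud2 hIus2,
      intervalIntegral.integral_sub intervalIntegrable_const hIus2,
      hudVal k hkT _ _ le_rfl hk2 hk1, intervalIntegral.integral_const, smul_eq_mul]
  rw [heq]
  have hbnd : ∀ x ∈ Set.uIoc ((k:ℝ)*Δt) t, ‖c k - ustar x j‖ ≤ ω Δt := by
    intro x hx
    rw [Set.uIoc_of_le hk1] at hx
    exact hpt k hkT x hx.1.le (le_trans hx.2 hk2)
  have hnorm := intervalIntegral.norm_integral_le_of_norm_le_const (C := ω Δt)
    (f := fun τ => c k - ustar τ j) hbnd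
  rw [Real.norm_eq_abs] at hnorm
  calc |∫ τ in ((k:ℝ)*Δt)..t, (c k - ustar τ j)| ≤ ω Δt * |t - (k:ℝ)*Δt| := hnorm
    _ ≤ ω Δt * Δt := by
        apply mul_le_mul_of_nonneg_left _ hωnn
        rw [abs_of_nonneg (by linarith)]
        linarith
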